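/- Let X = {x_1,...,x_N} be a finite set of points in R^m with Euclidean distance matrix d, and let p* be the maximizer of p ↦ p^T d p over the probability simplex. Then every point in the support of p* is a vertex (extreme point) of the convex hull of X. -/

import Mathlib

open Matrix BigOperators

/-- If `d` is the Euclidean distance matrix of distinct points `x 1, …, x N` in `ℝ^m` and
`p` maximizes `p ⬝ᵥ d p` over the probability simplex, then every point in the support of
`p` is a vertex (extreme point) of the convex hull of the points, i.e. it does not lie in
the convex hull of the other points. -/
theorem stmt5 {N m : ℕ} (x : Fin N → EuclideanSpace ℝ (Fin m))
    (hinj : Function.Injective x)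
    (d : Matrix (Fin N) (Fin N) ℝ) (hd : ∀ j k, d j k = dist (x j) (x k))
    (p : Fin N → ℝ) (hp : p ∈ stdSimplex ℝ (Fin N))
    (hmax : ∀ q ∈ stdSimplex ℝ (Fin N), q ⬝ᵥ d.mulVec q ≤ p ⬝ᵥ d.mulVec p) :
    ∀ j : Fin N, p j ≠ 0 → x j ∉ convexHull ℝ (x '' {k : Fin N | k ≠ j}) := by
  classical
  intro j hj hmem
  obtain ⟨hp0, hp1⟩ := hp
  have hpj : 0 < p j := lt_of_le_of_ne (hp0 j) (Ne.symm hj)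
  have hsym : d.IsSymm := by
    ext a b; simp only [transpose_apply]; rw [hd, hd, dist_comm]
  have hdiag : ∀ i, d i i = 0 := fun i => by simp [hd]
  have hdnn : ∀ a b, 0 ≤ d a b := fun a b => by rw [hd]; exact dist_nonneg
  -- extract weights indexed by `Fin N`
  rw [mem_convexHull_iff_exists_fintype] at hmem
  obtain ⟨ι, hι, v, z, hv0, hv1, hz, hsum⟩ := hmem
  choose κ hκj hκx using fun i => (hz i : z i ∈ x '' {k | k ≠ j})
  -- hκj : κ i ∈ {k | k ≠ j}, hκx : x (κ i) = z i  (order: need to check)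
  set w : Fin N → ℝ := fun l => ∑ i ∈ Finset.univ.filter (fun i => κ i = l), v i with hw
  have hw0 : ∀ l, 0 ≤ w l := fun l => Finset.sum_nonneg fun i _ => hv0 i
  have hwj : w j = 0 := by
    apply Finset.sum_eq_zero
    intro i hi
    exact absurd ((Finset.mem_filter.mp hi).2) (hκj i)
  have hfib : ∀ (f : ι → ℝ), ∑ l : Fin N, ∑ i ∈ Finset.univ.filter (fun i => κ i = l), f i
      = ∑ i, f i := by
    intro f
    rw [← Finset.sum_fiberwise_of_maps_to (fun i _ => Finset.mem_univ (κ i)) f]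
  have hw1 : ∑ l, w l = 1 := by rw [hw]; simpa [hfib] using hv1
  have hwx : ∑ l, w l • x l = x j := by
    have : ∑ l, w l • x l = ∑ l : Fin N, ∑ i ∈ Finset.univ.filter (fun i => κ i = l),
        v i • z i := by
      refine Finset.sum_congr rfl fun l _ => ?_
      rw [hw, Finset.sum_smul]
      refine Finset.sum_congr rfl fun i hi => ?_
      rw [← hκx i, (Finset.mem_filter.mp hi).2]
    rw [this, Finset.sum_fiberwise_of_maps_to (fun i _ => Finset.mem_univ (κ i))]
    exact hsum
  -- first-order optimality: (d p)_k ≤ (d p)_j for all k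
  set dp : Fin N → ℝ := d.mulVec p with hdp
  have hkey : ∀ k, dp k ≤ dp j := by
    intro k
    rcases eq_or_ne k j with rfl | hkj
    · exact le_refl _
    · -- perturbation
      have step : ∀ t : ℝ, 0 < t → t ≤ p j → dp k - dp j ≤ t * d j k := by
        intro t ht htp
        set a : Fin N → ℝ := Pi.single k (1:ℝ) - Pi.single j 1 with ha
        have hq : p + t • a ∈ stdSimplex ℝ (Fin N) := by
          constructor
          · intro i
            rcases eq_or_ne i k with rfl | hik
            · have : a i = 1 := by simp [ha, Pi.single_apply, hkj]
              simp only [Pi.add_apply, Pi.smul_apply, this, smul_eq_mul, mul_one]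
              linarith [hp0 i]
            · rcases eq_or_ne i j with rfl | hij
              · have : a i = -1 := by simp [ha, Pi.single_apply, hik]
                simp only [Pi.add_apply, Pi.smul_apply, this, smul_eq_mul]
                linarith
              · have : a i = 0 := by simp [ha, Pi.single_apply, hik, hij]
                simp only [Pi.add_apply, Pi.smul_apply, this, smul_eq_mul, mul_zero, add_zero]
                exact hp0 i
          · have hsa : ∑ i, (t • a) i = 0 := by
              have h1 : ∑ i, a i = 0 := by
                simp only [ha, Pi.sub_apply, Finset.sum_sub_distrib]
                rw [Finset.sum_pi_single', Finset.sum_pi_single']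
                simp
              calc ∑ i, (t • a) i = t * ∑ i, a i := by
                    rw [Finset.mul_sum]; rfl
                _ = 0 := by rw [h1, mul_zero]
            calc ∑ i, (p + t • a) i = ∑ i, p i + ∑ i, (t • a) i := by
                  simp [Finset.sum_add_distrib]
              _ = 1 := by rw [hsa, hp1, add_zero]
        have hexp : (p + t • a) ⬝ᵥ d.mulVec (p + t • a)
            = p ⬝ᵥ dp + t * (a ⬝ᵥ dp) + t * (p ⬝ᵥ d.mulVec a)
              + t * (t * (a ⬝ᵥ d.mulVec a)) := by
          simp [hdp, mulVec_add, dotProduct_add, add_dotProduct, mulVec_smul, dotProduct_smul,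
            smul_dotProduct, smul_eq_mul]
          ring
        have hadp : a ⬝ᵥ dp = dp k - dp j := by
          simp [ha, sub_dotProduct, single_dotProduct]
        have hpda : p ⬝ᵥ d.mulVec a = dp k - dp j := by
          rw [dotProduct_mulVec, dotProduct_comm, ← mulVec_transpose, hsym.eq, ← hdp, hadp]
        have hada : a ⬝ᵥ d.mulVec a = -(2 * d j k) := by
          have hva : d.mulVec a = fun i => d i k - d i j := by
            funext i; simp [ha, mulVec_sub, mulVec_single]
          rw [hva, ha, sub_dotProduct, single_dotProduct, single_dotProduct]
          have := hsym.apply k j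
          rw [hdiag, hdiag]
          rw [show d k j = d j k from this.symm]
          ring
        have := hmax (p + t • a) hq
        rw [hexp, hadp, hpda, hada] at this
        nlinarith
      by_contra hcon
      push_neg at hcon
      set c : ℝ := dp k - dp j with hc
      have hcpos : 0 < c := by simp [hc]; linarith
      have hdjk : 0 < d j k := by
        rw [hd]; exact dist_pos.mpr fun h => hkj (hinj h).symm
      set t : ℝ := min (p j) (c / (2 * d j k)) with htdef
      have ht0 : 0 < t := lt_min hpj (by positivity)
      have := step t ht0 (min_le_left _ _)
      have h2 : t * d j k ≤ (c / (2 * d j k)) * d j k :=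
        mul_le_mul_of_nonneg_right (min_le_right _ _) (le_of_lt hdjk)
      rw [div_mul_eq_mul_div, mul_comm (2:ℝ) (d j k), ← div_div,
        mul_div_assoc] at h2
      have h3 : d j k / d j k = 1 := div_self (ne_of_gt hdjk)
      rw [h3, mul_one] at h2
      linarith
  -- the contradiction
  have htri : ∀ l, dist (x j) (x l) ≤ ∑ k, w k * dist (x k) (x l) := by
    intro l
    have hxl : ∑ k, w k • x l = x l := by
      rw [← Finset.sum_smul, hw1, one_smul]
    have : x j - x l = ∑ k, w k • (x k - x l) := by
      rw [← hwx]
      conv_lhs => rw [← hxl]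
      rw [← Finset.sum_sub_distrib]
      exact Finset.sum_congr rfl fun k _ => (smul_sub (w k) (x k) (x l)).symm
    rw [dist_eq_norm, this]
    calc ‖∑ k, w k • (x k - x l)‖ ≤ ∑ k, ‖w k • (x k - x l)‖ := norm_sum_le _ _
      _ = ∑ k, w k * dist (x k) (x l) := by
          refine Finset.sum_congr rfl fun k _ => ?_
          rw [norm_smul, Real.norm_eq_abs, abs_of_nonneg (hw0 k), dist_eq_norm]
  have hstrict : (0:ℝ) < ∑ k, w k * dist (x k) (x j) := by
    obtain ⟨k0, hk0⟩ : ∃ k0, w k0 ≠ 0 := by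
      by_contra h
      push_neg at h
      simp [h] at hw1
    have hk0j : k0 ≠ j := fun h => hk0 (h ▸ hwj)
    refine Finset.sum_pos' (fun k _ => mul_nonneg (hw0 k) dist_nonneg) ⟨k0, Finset.mem_univ _, ?_⟩
    exact mul_pos (lt_of_le_of_ne (hw0 k0) (Ne.symm hk0)) (dist_pos.mpr fun h => hk0j (hinj h))
  -- dp j = ∑ l, p l * dist (x j) (x l)
  have hdpj : dp j = ∑ l, dist (x j) (x l) * p l := by
    simp [hdp, mulVec, dotProduct, hd]
  have hA : dp j < ∑ l, (∑ k, w k * dist (x k) (x l)) * p l := by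
    rw [hdpj]
    refine Finset.sum_lt_sum (fun l _ => mul_le_mul_of_nonneg_right (htri l) (hp0 l))
      ⟨j, Finset.mem_univ j, ?_⟩
    have : dist (x j) (x j) = 0 := dist_self _
    rw [this, zero_mul]
    exact mul_pos (by simpa [dist_comm] using hstrict) hpj
  have hdpk : ∀ k, dp k = ∑ l, dist (x k) (x l) * p l := fun k => by
    simp [hdp, mulVec, dotProduct, hd]
  have hB : ∑ l, (∑ k, w k * dist (x k) (x l)) * p l ≤ dp j := by
    have hre : ∑ l, (∑ k, w k * dist (x k) (x l)) * p l = ∑ k, w k * dp k := by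
      simp only [Finset.sum_mul]
      rw [Finset.sum_comm]
      refine Finset.sum_congr rfl fun k _ => ?_
      rw [hdpk k, Finset.mul_sum]
      exact Finset.sum_congr rfl fun l _ => by ring
    rw [hre]
    calc ∑ k, w k * dp k ≤ ∑ k, w k * dp j :=
          Finset.sum_le_sum fun k _ => mul_le_mul_of_nonneg_left (hkey k) (hw0 k)
      _ = dp j := by rw [← Finset.sum_mul, hw1, one_mul]
  linarith
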